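/- Let c = {c₁,…,c_k} be a set of k distinct points in E, let q be an NN quantizer with codebook c, and set M(c) = max_{i≠j} |c_i − c_j|. For every t with 0 < t < M(c)/2, every x ∈ E with d(x, 𝔉(c)) > t satisfies q(x_λ) = q(x) for λ = 2t/(M(c) − 2t), where x_λ = x + λ(x − q(x)); in other words, E \ 𝔉(c)ᵗ ⊆ A(2t/(M(c) − 2t)). -/

import Mathlib

open MeasureTheory Metric Set ENNReal

noncomputable section

variable {E : Type*} [NormedAddCommGroup E] [InnerProductSpace ℝ E] [MeasurableSpace E]

/-- A `k`-points nearest-neighbor quantizer: a Borel-measurable map whose image is a set of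
exactly `k` points and which maps every point to a nearest point of its codebook. -/
def IsNNQuantizer (k : ℕ) (q : E → E) : Prop :=
  Measurable q ∧ (∃ s : Finset E, s.card = k ∧ Set.range q = ↑s) ∧
    ∀ x : E, ∀ c ∈ Set.range q, ‖x - q x‖ ≤ ‖x - c‖

/-- The risk (distortion) of a quantizer with respect to `P`. -/
def risk (P : Measure E) (q : E → E) : ℝ := ∫ x, ‖x - q x‖ ^ 2 ∂P

/-- An optimal `k`-points NN quantizer for `P`. -/
def IsOptimalQuantizer (P : Measure E) (k : ℕ) (q : E → E) : Prop :=
  IsNNQuantizer k q ∧ ∀ q', IsNNQuantizer k q' → risk P q ≤ risk P q'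

/-- The absolute margin condition with parameter `l0` (with respect to the optimal quantizer
`qs`):  (1) the set `A(l0)` has full `P`-measure; (2) for every random variable `Y`
(encoded by a coupling `π` of the law `P` of `X` and the law of `Y`) with
`E|X - Y|² ≤ l0² E|X - qs X|²`, the map `q ↦ E|Y - q Y|²` over `k`-points NN quantizers has a
unique minimizer (uniqueness of its codebook). -/
def AbsoluteMargin (P : Measure E) (k : ℕ) (qs : E → E) (l0 : ℝ) : Prop :=
  P {x | qs (x + l0 • (x - qs x)) = qs x} = 1 ∧
  ∀ π : Measure (E × E), IsProbabilityMeasure π → π.map Prod.fst = P →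
    (∫ p, ‖p.1 - p.2‖ ^ 2 ∂π) ≤ l0 ^ 2 * ∫ x, ‖x - qs x‖ ^ 2 ∂P →
    ∃ q0, IsNNQuantizer k q0 ∧
      (∀ q', IsNNQuantizer k q' → risk (π.map Prod.snd) q0 ≤ risk (π.map Prod.snd) q') ∧
      ∀ q', IsNNQuantizer k q' →
        (∀ q'', IsNNQuantizer k q'' → risk (π.map Prod.snd) q' ≤ risk (π.map Prod.snd) q'') →
        Set.range q' = Set.range q0

/-- Voronoi cell of the `j`-th point of the codebook `c`. -/
def Vcell (k : ℕ) (c : Fin k → E) (j : Fin k) : Set E := {x | ∀ l, ‖x - c j‖ ≤ ‖x - c l‖}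

/-- The frontier of the Voronoi diagram generated by `c`. -/
def VorFrontier (k : ℕ) (c : Fin k → E) : Set E :=
  ⋃ (i) (j) (_ : i ≠ j), Vcell k c i ∩ Vcell k c j

/-- `F₁` between two codebooks: min over permutations of the max distance of matched centers. -/
def F1 (k : ℕ) (c c' : Fin k → E) : ℝ :=
  ⨅ σ : Equiv.Perm (Fin k), ⨆ j, ‖c j - c' (σ j)‖

/-- `F₂` between two codebooks: the minimal `P`-mass of misclassified points. -/
def F2 (P : Measure E) (k : ℕ) (c c' : Fin k → E) : ℝ :=
  ⨅ σ : Equiv.Perm (Fin k), (P (⋃ j, Vcell k c j ∩ Vcell k c' (σ j))ᶜ).toReal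

/-- `max_{i ≠ j} ‖c i - c j‖`. -/
def maxDist (k : ℕ) (c : Fin k → E) : ℝ :=
  ⨆ p : {p : Fin k × Fin k // p.1 ≠ p.2}, ‖c p.1.1 - c p.1.2‖

/-- `min_{i ≠ j} ‖c i - c j‖`. -/
def minDist (k : ℕ) (c : Fin k → E) : ℝ :=
  ⨅ p : {p : Fin k × Fin k // p.1 ≠ p.2}, ‖c p.1.1 - c p.1.2‖

/-- The function `p⋆(t)` of Definition `def:pstar`, for the optimal codebook `cs` of the
optimal quantizer `qs`. -/
def pstar (P : Measure E) (k : ℕ) (cs : Fin k → E) (qs : E → E) (t : ℝ) : ℝ :=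
  (P (⋃ i, {x | minDist k cs * infDist x (frontier (Vcell k cs i)) ≤
      2 * ‖x - qs x‖ * t + 2 * t ^ 2})).toReal

/-- `F₁` between two quantizers, defined through enumerations of their codebooks. -/
def F1Q (k : ℕ) (q q' : E → E) : ℝ :=
  sInf {r | ∃ c c' : Fin k → E, Set.range c = Set.range q ∧ Set.range c' = Set.range q' ∧
    r = ⨆ j, ‖c j - c' j‖}

lemma aux_expand1 (a b z : E) (μ : ℝ) :
    ‖(z + μ • (z - a)) - b‖^2 - ‖(z + μ • (z - a)) - a‖^2
      = (1+μ) * (‖z - b‖^2 - ‖z - a‖^2) - μ * ‖a - b‖^2 := by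
  have h : ∀ v : E, ‖v‖^2 = inner ℝ v v := fun v => (real_inner_self_eq_norm_sq v).symm
  simp only [h, inner_sub_left, inner_sub_right, inner_add_left, inner_add_right,
    real_inner_smul_left, real_inner_smul_right, real_inner_comm a z, real_inner_comm b z,
    real_inner_comm b a]
  ring

lemma aux_expand2 (a b z : E) (s : ℝ) :
    ‖(z + s • (b - a)) - b‖^2 - ‖(z + s • (b - a)) - a‖^2
      = (‖z - b‖^2 - ‖z - a‖^2) - 2 * s * ‖b - a‖^2 := by
  have h : ∀ v : E, ‖v‖^2 = inner ℝ v v := fun v => (real_inner_self_eq_norm_sq v).symm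
  simp only [h, inner_sub_left, inner_sub_right, inner_add_left, inner_add_right,
    real_inner_smul_left, real_inner_smul_right, real_inner_comm a z, real_inner_comm b z,
    real_inner_comm b a]
  ring

lemma aux_vcell_closed (k : ℕ) (c : Fin k → E) (m : Fin k) : IsClosed (Vcell k c m) := by
  have : Vcell k c m = ⋂ l, {z : E | ‖z - c m‖ ≤ ‖z - c l‖} := by
    ext z; simp [Vcell]
  rw [this]
  exact isClosed_iInter fun l => isClosed_le (by continuity) (by continuity)

lemma aux_crossing {k : ℕ} (c : Fin k → E) (i j : Fin k) (hij : j ≠ i)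
    (x p : E) (hx : x ∈ Vcell k c i) (hp : ‖p - c j‖ ≤ ‖p - c i‖) :
    infDist x (VorFrontier k c) ≤ ‖x - p‖ := by
  set g : ℝ → E := fun s => x + s • (p - x) with hg
  have hgc : Continuous g := continuous_const.add (continuous_id.smul continuous_const)
  set S : Set ℝ := Icc (0:ℝ) 1 ∩ g ⁻¹' (Vcell k c i) with hS
  have hg0 : g 0 = x := by simp [hg]
  have h0S : (0:ℝ) ∈ S := ⟨⟨le_refl _, zero_le_one⟩, by simp [hg0, hx]⟩
  have hSclosed : IsClosed S := isClosed_Icc.inter ((aux_vcell_closed k c i).preimage hgc)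
  have hScompact : IsCompact S :=
    (isCompact_Icc (a := (0:ℝ)) (b := 1)).of_isClosed_subset hSclosed inter_subset_left
  set s₀ := sSup S with hs₀def
  have hs₀S : s₀ ∈ S := hScompact.sSup_mem ⟨0, h0S⟩
  have hbdd : BddAbove S := hScompact.bddAbove
  set y := g s₀ with hy
  have hyVi : y ∈ Vcell k c i := hs₀S.2
  have hmain : ∃ l : Fin k, l ≠ i ∧ ‖y - c l‖ ≤ ‖y - c i‖ := by
    rcases eq_or_lt_of_le hs₀S.1.2 with h1 | h1
    · refine ⟨j, hij, ?_⟩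
      have : y = p := by simp [hy, hg, h1]
      rw [this]; exact hp
    · set T : Set ℝ := ⋃ l : {l : Fin k // l ≠ i},
        {s ∈ Icc s₀ 1 | ‖g s - c l.1‖ ≤ ‖g s - c i‖} with hT
      have hTclosed : IsClosed T := by
        apply isClosed_iUnion_of_finite
        intro l
        have : {s ∈ Icc s₀ 1 | ‖g s - c l.1‖ ≤ ‖g s - c i‖}
            = Icc s₀ 1 ∩ {s | ‖g s - c l.1‖ ≤ ‖g s - c i‖} := by ext; simp [mem_setOf_eq]
        rw [this]
        exact isClosed_Icc.inter (isClosed_le ((hgc.sub continuous_const).norm)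
          ((hgc.sub continuous_const).norm))
      have hsub : Ioc s₀ 1 ⊆ T := by
        intro s hs
        have hnot : g s ∉ Vcell k c i := by
          intro hmem
          have : s ∈ S := ⟨⟨le_trans hs₀S.1.1 hs.1.le, hs.2⟩, hmem⟩
          exact absurd (le_csSup hbdd this) (not_le.mpr hs.1)
        obtain ⟨l, hl⟩ := not_forall.mp hnot
        have hl' : ‖g s - c l‖ < ‖g s - c i‖ := not_le.mp hl
        have hlne : l ≠ i := by rintro rfl; exact absurd rfl (ne_of_lt hl')
        exact mem_iUnion.mpr ⟨⟨l, hlne⟩, ⟨hs.1.le, hs.2⟩, hl'.le⟩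
      have hs₀T : s₀ ∈ T := by
        have h1' : s₀ ∈ closure (Ioc s₀ 1) := by
          rw [closure_Ioc (ne_of_lt h1)]; exact ⟨le_refl _, h1.le⟩
        exact hTclosed.closure_eq ▸ (closure_mono hsub) h1'
      obtain ⟨l, hl⟩ := mem_iUnion.mp hs₀T
      exact ⟨l.1, l.2, hl.2⟩
  obtain ⟨l, hlne, hle⟩ := hmain
  have heq : ‖y - c l‖ = ‖y - c i‖ := le_antisymm hle (hyVi l)
  have hyVl : y ∈ Vcell k c l := fun m => heq ▸ hyVi m
  have hyF : y ∈ VorFrontier k c :=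
    mem_iUnion.mpr ⟨i, mem_iUnion.mpr ⟨l, mem_iUnion.mpr ⟨hlne.symm, hyVi, hyVl⟩⟩⟩
  calc infDist x (VorFrontier k c) ≤ dist x y := infDist_le_dist_of_mem hyF
    _ ≤ ‖x - p‖ := by
        rw [dist_eq_norm]
        have : x - y = -(s₀ • (p - x)) := by simp [hy, hg]
        rw [this, norm_neg, norm_smul, Real.norm_eq_abs,
          abs_of_nonneg hs₀S.1.1, norm_sub_rev x p]
        nlinarith [norm_nonneg (p - x), hs₀S.1.2]

/-- points at distance more than `t` from the frontier of the Voronoi diagram keep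
the same image under `q` after inflation by `λ = 2t/(M(c) - 2t)` (Remark `lem:l0`, part 1). -/
theorem stmt5 [BorelSpace E] [CompleteSpace E] [SecondCountableTopology E]
    (k : ℕ) (c : Fin k → E) (hc_inj : Function.Injective c)
    (q : E → E) (hq : IsNNQuantizer k q) (hrange : Set.range q = Set.range c)
    (t : ℝ) (ht : 0 < t) (htM : t < maxDist k c / 2)
    (x : E) (hx : t < infDist x (VorFrontier k c)) :
    q (x + (2 * t / (maxDist k c - 2 * t)) • (x - q x)) = q x := by
  obtain ⟨i, hi⟩ : ∃ i, q x = c i := by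
    have : q x ∈ Set.range c := hrange ▸ Set.mem_range_self x
    exact this.imp fun i h => h.symm
  set M := maxDist k c with hM
  have hMle : ∀ a b : Fin k, a ≠ b → ‖c a - c b‖ ≤ M := by
    intro a b hab
    exact le_ciSup (Set.Finite.bddAbove (Set.finite_range
      (fun p : {p : Fin k × Fin k // p.1 ≠ p.2} => ‖c p.1.1 - c p.1.2‖))) ⟨(a, b), hab⟩
  have hM2t : 0 < M - 2 * t := by rw [hM]; linarith
  have hxVi : x ∈ Vcell k c i := by
    intro l
    rw [← hi]
    exact hq.2.2 x (c l) (hrange ▸ Set.mem_range_self l)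
  have key : ∀ j, j ≠ i → 2 * t * ‖c i - c j‖ < ‖x - c j‖^2 - ‖x - c i‖^2 := by
    intro j hji
    have hd0 : 0 < ‖c i - c j‖ := by
      rw [norm_pos_iff, sub_ne_zero]
      exact fun h => hji.symm (hc_inj h)
    set d := ‖c i - c j‖ with hd
    set f := ‖x - c j‖^2 - ‖x - c i‖^2 with hf
    have hf0 : 0 ≤ f := by
      have h1 := hxVi j
      have h2 := norm_nonneg (x - c i)
      rw [hf]; nlinarith
    set s := f / (2 * d^2) with hs
    have hs0 : 0 ≤ s := div_nonneg hf0 (by positivity)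
    set p := x + s • (c j - c i) with hp
    have hpe : ‖p - c j‖^2 - ‖p - c i‖^2 = f - 2 * s * d^2 := by
      rw [hp, hf, aux_expand2 (c i) (c j) x s, hd, norm_sub_rev (c j) (c i)]
    have hzero : f - 2 * s * d^2 = 0 := by
      rw [hs]; field_simp; ring
    have hpeq : ‖p - c j‖ ≤ ‖p - c i‖ := by
      nlinarith [norm_nonneg (p - c j), norm_nonneg (p - c i)]
    have hcr := aux_crossing c i j hji x p hxVi hpeq
    have hxp : ‖x - p‖ = s * d := by
      have h3 : x - p = -(s • (c j - c i)) := by rw [hp]; abel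
      rw [h3, norm_neg, norm_smul, Real.norm_eq_abs, abs_of_nonneg hs0,
        norm_sub_rev (c j) (c i)]
    have hlt : t < s * d := lt_of_lt_of_le hx (hxp ▸ hcr)
    have hsd : s * d * (2 * d) = f := by
      rw [hs]; field_simp
    nlinarith
  set lam := 2 * t / (M - 2 * t) with hlam
  have hlam0 : 0 ≤ lam := by positivity
  have hlamM : lam * (M - 2 * t) = 2 * t := div_mul_cancel₀ _ (ne_of_gt hM2t)
  set y := x + lam • (x - q x) with hy
  obtain ⟨m, hm⟩ : ∃ m, q y = c m := by
    have : q y ∈ Set.range c := hrange ▸ Set.mem_range_self y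
    exact this.imp fun m h => h.symm
  rcases eq_or_ne m i with rfl | hmi
  · rw [hm, hi]
  · exfalso
    have hexp : ‖y - c m‖^2 - ‖y - c i‖^2
        = (1 + lam) * (‖x - c m‖^2 - ‖x - c i‖^2) - lam * ‖c i - c m‖^2 := by
      rw [hy, hi]; exact aux_expand1 (c i) (c m) x lam
    have hdM : ‖c i - c m‖ ≤ M := hMle i m (Ne.symm hmi)
    have hd0 : 0 < ‖c i - c m‖ := by
      rw [norm_pos_iff, sub_ne_zero]
      exact fun h => hmi.symm (hc_inj h)
    have hk := key m hmi
    have hpos : 0 < ‖y - c m‖^2 - ‖y - c i‖^2 := by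
      rw [hexp]
      nlinarith [mul_le_mul_of_nonneg_left hdM hlam0,
        mul_le_mul_of_nonneg_right (mul_le_mul_of_nonneg_left hdM hlam0) hd0.le]
    have hstrict : ‖y - c i‖ < ‖y - c m‖ := by
      nlinarith [norm_nonneg (y - c i), norm_nonneg (y - c m)]
    have hnn := hq.2.2 y (c i) (hrange ▸ Set.mem_range_self i)
    rw [hm] at hnn
    linarith
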